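/- Let X be a nondegenerate real random variable with continuous CDF F, let X' be an independent copy of X, and let T be an absolutely continuous random variable with CDF F_T having the same support as X. Then ∫ F(x)(1 − F(x)) dF_T(x) = (1/2) · E[F_T(max{X, X'}) − F_T(min{X, X'})]; i.e. the weighted q-distorted Gini function with both distortions equal to the identity equals half the expected F_T-spread of two independent copies of X. -/

import Mathlib

open MeasureTheory ProbabilityTheory Set

/-- The (essential) support interval of a CDF `F`: the set where `0 < F x < 1`,
which coincides (up to endpoints) with the interval `(l, r)` where
`l = inf {x : F x > 0}` and `r = sup {x : 1 - F x > 0}`. -/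
def cigfSupport (F : ℝ → ℝ) : Set ℝ := {x | 0 < F x ∧ F x < 1}

/-- The CDF of a probability measure on `ℝ`. -/
noncomputable def cdfOf (μ : Measure ℝ) (x : ℝ) : ℝ := (μ (Iic x)).toReal

lemma measure_Ioc_toReal (μ : Measure ℝ) [IsFiniteMeasure μ] {a b : ℝ} (h : a ≤ b) :
    (μ (Set.Ioc a b)).toReal = cdfOf μ b - cdfOf μ a := by
  have h1 : μ (Set.Iic b) = μ (Set.Iic a) + μ (Set.Ioc a b) := by
    rw [← measure_union (Set.Iic_disjoint_Ioc le_rfl) measurableSet_Ioc,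
        Set.Iic_union_Ioc_eq_Iic h]
  unfold cdfOf
  rw [h1, ENNReal.toReal_add (measure_ne_top _ _) (measure_ne_top _ _)]
  ring

/-- For a nondegenerate `X` with continuous CDF `F`, an independent copy
`X'`, and an absolutely continuous `T` with CDF `F_T` having the same support as `X`,
`∫ F(x)(1 - F(x)) dF_T(x) = (1/2) E[F_T(max(X, X')) - F_T(min(X, X'))]`. -/
theorem stmt19 {Ω : Type*} [MeasurableSpace Ω] (P : Measure Ω) [IsProbabilityMeasure P]
    (X X' : Ω → ℝ) (hX : Measurable X) (hX' : Measurable X')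
    (hindep : IndepFun X X' P)
    (μ : Measure ℝ) (hidX : Measure.map X P = μ) (hidX' : Measure.map X' P = μ)
    (hFcont : Continuous (cdfOf μ))
    (hnondeg : ∃ x : ℝ, 0 < cdfOf μ x ∧ cdfOf μ x < 1)
    (fT : ℝ → ℝ) (hfT : ∀ x, 0 ≤ fT x)
    (ν : Measure ℝ) [IsProbabilityMeasure ν]
    (hν : ν = volume.withDensity fun x => ENNReal.ofReal (fT x))
    (hsupp : cigfSupport (cdfOf μ) = cigfSupport (cdfOf ν)) :
    ∫ x, cdfOf μ x * (1 - cdfOf μ x) ∂ν =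
      (1 / 2) *
        ∫ ω, (cdfOf ν (max (X ω) (X' ω)) - cdfOf ν (min (X ω) (X' ω))) ∂P := by
  classical
  haveI hμprob : IsProbabilityMeasure μ := hidX ▸ Measure.isProbabilityMeasure_map hX.aemeasurable
  -- μ has no atoms, since its CDF is continuous
  have hatom : ∀ x : ℝ, μ {x} = 0 := by
    intro x
    have h0 : (μ {x}).toReal = 0 := by
      by_contra h
      have hpos : 0 < (μ {x}).toReal :=
        lt_of_le_of_ne ENNReal.toReal_nonneg (Ne.symm h)
      obtain ⟨δ, hδ, hδ'⟩ := Metric.continuousAt_iff.mp hFcont.continuousAt _ hpos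
      set y := x - δ / 2 with hy
      have hyx : y < x := by simp only [hy]; linarith
      have hsub : ({x} : Set ℝ) ⊆ Set.Ioc y x := by
        intro z hz; simp only [Set.mem_singleton_iff] at hz; subst hz
        exact ⟨hyx, le_rfl⟩
      have hle : (μ {x}).toReal ≤ (μ (Set.Ioc y x)).toReal :=
        ENNReal.toReal_mono (measure_ne_top _ _) (measure_mono hsub)
      have hIoc : (μ (Set.Ioc y x)).toReal = cdfOf μ x - cdfOf μ y :=
        measure_Ioc_toReal μ hyx.le
      have hdist : dist y x < δ := by
        simp only [Real.dist_eq, hy]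
        rw [abs_of_nonpos (by linarith)]
        linarith
      have := hδ' hdist
      rw [Real.dist_eq] at this
      have hmono : cdfOf μ y ≤ cdfOf μ x := by
        unfold cdfOf
        exact ENNReal.toReal_mono (measure_ne_top _ _)
          (measure_mono (Set.Iic_subset_Iic.mpr hyx.le))
      rw [abs_of_nonpos (by linarith)] at this
      linarith [hle.trans_eq hIoc]
    rcases (ENNReal.toReal_eq_zero_iff _).mp h0 with h | h
    · exact h
    · exact absurd h (measure_ne_top _ _)
  have hIio : ∀ x : ℝ, μ (Set.Iio x) = μ (Set.Iic x) := by
    intro x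
    rw [← Set.Iio_union_right]
    exact (measure_congr (union_ae_eq_left_of_ae_eq_empty (ae_eq_empty.mpr (hatom x)))).symm
  have hIci : ∀ x : ℝ, μ (Set.Ici x) = μ (Set.Ioi x) := by
    intro x
    rw [← Set.Ioi_union_left]
    exact measure_congr (union_ae_eq_left_of_ae_eq_empty (ae_eq_empty.mpr (hatom x)))
  -- slice probability
  have hslice : ∀ x : ℝ,
      P {ω | min (X ω) (X' ω) < x ∧ x ≤ max (X ω) (X' ω)} =
        2 * (μ (Set.Iic x) * μ (Set.Ioi x)) := by
    intro x
    have hset : {ω | min (X ω) (X' ω) < x ∧ x ≤ max (X ω) (X' ω)}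
        = (X ⁻¹' Set.Iio x ∩ X' ⁻¹' Set.Ici x) ∪ (X' ⁻¹' Set.Iio x ∩ X ⁻¹' Set.Ici x) := by
      ext ω
      simp only [Set.mem_setOf_eq, Set.mem_union, Set.mem_inter_iff, Set.mem_preimage,
        Set.mem_Iio, Set.mem_Ici]
      constructor
      · rintro ⟨h1, h2⟩
        rcases min_lt_iff.mp h1 with h | h
        · refine Or.inl ⟨h, ?_⟩
          rcases le_max_iff.mp h2 with h' | h'
          · linarith
          · exact h'
        · refine Or.inr ⟨h, ?_⟩
          rcases le_max_iff.mp h2 with h' | h'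
          · exact h'
          · linarith
      · rintro (⟨h1, h2⟩ | ⟨h1, h2⟩)
        · exact ⟨min_lt_iff.mpr (Or.inl h1), le_max_iff.mpr (Or.inr h2)⟩
        · exact ⟨min_lt_iff.mpr (Or.inr h1), le_max_iff.mpr (Or.inl h2)⟩
    have hdisj : Disjoint (X ⁻¹' Set.Iio x ∩ X' ⁻¹' Set.Ici x)
        (X' ⁻¹' Set.Iio x ∩ X ⁻¹' Set.Ici x) := by
      rw [Set.disjoint_left]
      rintro ω ⟨h1, h2⟩ ⟨h3, h4⟩
      simp only [Set.mem_preimage, Set.mem_Iio, Set.mem_Ici] at h1 h2 h3 h4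
      linarith
    have h1 : P (X ⁻¹' Set.Iio x ∩ X' ⁻¹' Set.Ici x) = μ (Set.Iic x) * μ (Set.Ioi x) := by
      rw [hindep.measure_inter_preimage_eq_mul _ _ measurableSet_Iio measurableSet_Ici,
        ← Measure.map_apply hX measurableSet_Iio, ← Measure.map_apply hX' measurableSet_Ici,
        hidX, hidX', hIio, hIci]
    have h2 : P (X' ⁻¹' Set.Iio x ∩ X ⁻¹' Set.Ici x) = μ (Set.Iic x) * μ (Set.Ioi x) := by
      rw [hindep.symm.measure_inter_preimage_eq_mul _ _ measurableSet_Iio measurableSet_Ici,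
        ← Measure.map_apply hX' measurableSet_Iio, ← Measure.map_apply hX measurableSet_Ici,
        hidX, hidX', hIio, hIci]
    rw [hset, measure_union hdisj ((hX' measurableSet_Iio).inter
      (hX measurableSet_Ici)), h1, h2, two_mul]
  -- the product set
  set s : Set (Ω × ℝ) :=
    {p | min (X p.1) (X' p.1) < p.2 ∧ p.2 ≤ max (X p.1) (X' p.1)} with hs_def
  have hms : MeasurableSet s := by
    have h1 : MeasurableSet {p : Ω × ℝ | min (X p.1) (X' p.1) < p.2} :=
      measurableSet_lt ((hX.comp measurable_fst).min (hX'.comp measurable_fst)) measurable_snd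
    have h2 : MeasurableSet {p : Ω × ℝ | p.2 ≤ max (X p.1) (X' p.1)} :=
      measurableSet_le measurable_snd ((hX.comp measurable_fst).max (hX'.comp measurable_fst))
    exact h1.inter h2
  have hprod1 : (P.prod ν) s =
      ∫⁻ ω, ν (Set.Ioc (min (X ω) (X' ω)) (max (X ω) (X' ω))) ∂P := by
    rw [Measure.prod_apply hms]
    exact lintegral_congr fun ω => rfl
  have hprod2 : (P.prod ν) s = ∫⁻ x, 2 * (μ (Set.Iic x) * μ (Set.Ioi x)) ∂ν := by
    rw [Measure.prod_apply_symm hms]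
    refine lintegral_congr fun x => ?_
    rw [← hslice x]
    rfl
  -- measurability of the ENNReal CDF functions
  have hmIic : Measurable fun x : ℝ => μ (Set.Iic x) :=
    Monotone.measurable fun a b hab => measure_mono (Set.Iic_subset_Iic.mpr hab)
  have hmIoi : Measurable fun x : ℝ => μ (Set.Ioi x) :=
    Antitone.measurable fun a b hab => measure_mono (Set.Ioi_subset_Ioi hab)
  -- LHS as a lintegral
  have hIoi_toReal : ∀ x : ℝ, (μ (Set.Ioi x)).toReal = 1 - cdfOf μ x := by
    intro x
    have h : μ (Set.Ioi x) = 1 - μ (Set.Iic x) := by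
      rw [← Set.compl_Iic, measure_compl measurableSet_Iic (measure_ne_top _ _), measure_univ]
    rw [h, ENNReal.toReal_sub_of_le prob_le_one ENNReal.one_ne_top, ENNReal.toReal_one]
    rfl
  have hLHS : ∫ x, cdfOf μ x * (1 - cdfOf μ x) ∂ν =
      (∫⁻ x, μ (Set.Iic x) * μ (Set.Ioi x) ∂ν).toReal := by
    rw [← integral_toReal (f := fun x => μ (Set.Iic x) * μ (Set.Ioi x)) ((hmIic.mul hmIoi).aemeasurable)
      (Filter.Eventually.of_forall fun x => lt_of_le_of_lt
        (mul_le_mul' (measure_mono (Set.subset_univ _)) (measure_mono (Set.subset_univ _)))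
        (by simp [measure_univ]))]
    refine integral_congr_ae (Filter.Eventually.of_forall fun x => ?_)
    show cdfOf μ x * (1 - cdfOf μ x) = (μ (Set.Iic x) * μ (Set.Ioi x)).toReal
    rw [ENNReal.toReal_mul, hIoi_toReal x]
    rfl
  -- RHS as a lintegral
  have hmeas_slice : Measurable fun ω =>
      ν (Set.Ioc (min (X ω) (X' ω)) (max (X ω) (X' ω))) := by
    exact measurable_measure_prodMk_left hms
  have hRHS : ∫ ω, (cdfOf ν (max (X ω) (X' ω)) - cdfOf ν (min (X ω) (X' ω))) ∂P =
      ((P.prod ν) s).toReal := by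
    rw [hprod1, ← integral_toReal hmeas_slice.aemeasurable
      (Filter.Eventually.of_forall fun ω => measure_lt_top _ _)]
    refine integral_congr_ae (Filter.Eventually.of_forall fun ω => ?_)
    exact (measure_Ioc_toReal ν (min_le_max)).symm
  rw [hLHS, hRHS, hprod2]
  rw [lintegral_const_mul 2 (f := fun x => μ (Set.Iic x) * μ (Set.Ioi x)) (hmIic.mul hmIoi), ENNReal.toReal_mul]
  norm_num
  ring
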